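/- Let Φ = {φ_i}_{i∈I_m} be a frame for a finite-dimensional Hilbert space H_n whose frame operator S_Φ is diagonal with respect to a fixed orthonormal basis. Then Φ does weak phase retrieval if and only if its canonical dual {S_Φ^{-1} φ_i} does weak phase retrieval. -/

import Mathlib

variable {𝕜 : Type*} [RCLike 𝕜] {n : ℕ}

/-- The phase of a scalar: `z / |z|`. -/
noncomputable def phase (z : 𝕜) : 𝕜 := z / (‖z‖ : 𝕜)

/-- `x` and `y` weakly have the same phase (coordinates w.r.t. the standard
orthonormal basis of `𝕜^n`). -/
def WeaklySamePhase (x y : EuclideanSpace 𝕜 (Fin n)) : Prop :=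
  ∃ α : 𝕜, ‖α‖ = 1 ∧
    ∀ j, x j ≠ 0 → y j ≠ 0 → phase (x j) = α * phase (y j)

/-- The family `φ` does weak phase retrieval. -/
def DoesWeakPhaseRetrieval {ι : Type*} (φ : ι → EuclideanSpace 𝕜 (Fin n)) : Prop :=
  ∀ x y : EuclideanSpace 𝕜 (Fin n),
    (∀ i, ‖(inner 𝕜 x (φ i) : 𝕜)‖ = ‖(inner 𝕜 y (φ i) : 𝕜)‖) → WeaklySamePhase x y

lemma phase_mul (a b : 𝕜) : phase (a * b) = phase a * phase b := by
  unfold phase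
  rw [norm_mul]
  push_cast
  rw [mul_div_mul_comm]

lemma phase_ne_zero {a : 𝕜} (h : a ≠ 0) : phase a ≠ 0 :=
  div_ne_zero h (by simpa using norm_ne_zero_iff.mpr h)

/-- rescaling coordinates by nonzero scalars preserves weak same-phase
(in the reverse direction). -/
lemma wsp_of_rescale {c : Fin n → 𝕜} (hc : ∀ j, c j ≠ 0)
    {x y x' y' : EuclideanSpace 𝕜 (Fin n)}
    (hx : ∀ j, x' j = c j * x j) (hy : ∀ j, y' j = c j * y j)
    (h : WeaklySamePhase x' y') : WeaklySamePhase x y := by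
  obtain ⟨α, hα, hph⟩ := h
  refine ⟨α, hα, fun j hxj hyj => ?_⟩
  have h' := hph j (by rw [hx]; exact mul_ne_zero (hc j) hxj)
    (by rw [hy]; exact mul_ne_zero (hc j) hyj)
  rw [hx, hy, phase_mul, phase_mul] at h'
  have hcj : phase (c j) ≠ 0 := phase_ne_zero (hc j)
  field_simp at h'
  rcases mul_right_cancel₀ hcj (by linear_combination (phase (c j)) * h' : phase (x j) * phase (c j) = α * phase (y j) * phase (c j)) with h''
  exact h''

/-- transfer lemma: if inner products against `ψ` are obtained from inner
products against `φ` via a diagonal rescaling of the vector, then WPR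
transfers from `φ` to `ψ`. -/
lemma wpr_transfer {m : ℕ} {φ ψ : Fin m → EuclideanSpace 𝕜 (Fin n)}
    {c : Fin n → 𝕜} (hc : ∀ j, c j ≠ 0)
    (hinner : ∀ (x : EuclideanSpace 𝕜 (Fin n)) (i : Fin m),
      (inner 𝕜 ((WithLp.equiv 2 (Fin n → 𝕜)).symm fun j => c j * x j) (φ i) : 𝕜)
        = inner 𝕜 x (ψ i))
    (h : DoesWeakPhaseRetrieval φ) : DoesWeakPhaseRetrieval ψ := by
  intro x y hxy
  set x' : EuclideanSpace 𝕜 (Fin n) := (WithLp.equiv 2 (Fin n → 𝕜)).symm fun j => c j * x j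
  set y' : EuclideanSpace 𝕜 (Fin n) := (WithLp.equiv 2 (Fin n → 𝕜)).symm fun j => c j * y j
  have h' : WeaklySamePhase x' y' := by
    refine h x' y' fun i => ?_
    rw [hinner x i, hinner y i, hxy i]
  exact wsp_of_rescale hc (fun j => by simp [x']) (fun j => by simp [y']) h'

/-- if the frame operator `S_φ f = ∑ ⟨f, φ i⟩ φ i` of a frame
`φ` is diagonal w.r.t. the standard orthonormal basis, then `φ` does weak
phase retrieval iff its canonical dual `ψ` (characterized by `S_φ (ψ i) = φ i`)
does weak phase retrieval. -/
theorem weakPhaseRetrieval_canonicalDual {m : ℕ}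
    (φ ψ : Fin m → EuclideanSpace 𝕜 (Fin n))
    (hframe : Submodule.span 𝕜 (Set.range φ) = ⊤)
    (d : Fin n → 𝕜)
    (hdiag : ∀ f : EuclideanSpace 𝕜 (Fin n), ∀ j,
      (∑ i, (inner 𝕜 (φ i) f : 𝕜) • φ i) j = d j * f j)
    (hψ : ∀ i, ∑ j, (inner 𝕜 (φ j) (ψ i) : 𝕜) • φ j = φ i) :
    DoesWeakPhaseRetrieval φ ↔ DoesWeakPhaseRetrieval ψ := by
  -- φ i j = d j * ψ i j
  have key : ∀ i j, φ i j = d j * ψ i j := by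
    intro i j
    rw [← hdiag (ψ i) j, hψ i]
  -- d j ≠ 0
  have hd : ∀ j, d j ≠ 0 := by
    intro j hdj
    -- every φ i has j-th coordinate 0, so every element of the span does
    have hcoord : ∀ i, φ i j = 0 := fun i => by rw [key i j, hdj, zero_mul]
    have : (EuclideanSpace.single j (1 : 𝕜) : EuclideanSpace 𝕜 (Fin n))
        ∈ Submodule.span 𝕜 (Set.range φ) := by rw [hframe]; trivial
    rw [Submodule.mem_span_range_iff_exists_fun] at this
    obtain ⟨cf, hcf⟩ := this
    have := congrArg (fun v : EuclideanSpace 𝕜 (Fin n) => v j) hcf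
    simp only [PiLp.smul_apply] at this
    rw [WithLp.ofLp_sum, Finset.sum_apply] at this
    simp only [PiLp.smul_apply, smul_eq_mul, hcoord, mul_zero,
      Finset.sum_const_zero, EuclideanSpace.single_apply, if_pos rfl] at this
    exact one_ne_zero this.symm
  -- inner product formula
  have inner_eq : ∀ x y : EuclideanSpace 𝕜 (Fin n),
      (inner 𝕜 x y : 𝕜) = ∑ j, (starRingEnd 𝕜) (x j) * y j := fun x y => by
    simp [PiLp.inner_apply, RCLike.inner_apply, mul_comm]
  constructor
  · refine wpr_transfer (c := fun j => ((starRingEnd 𝕜) (d j))⁻¹)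
      (fun j => inv_ne_zero (by simpa using hd j)) ?_
    intro x i
    rw [inner_eq, inner_eq]
    refine Finset.sum_congr rfl fun j _ => ?_
    simp only [WithLp.equiv_symm_apply]
    rw [key i j]
    rw [map_mul, map_inv₀, RingHomInvPair.comp_apply_eq₂]
    have hdj := hd j
    field_simp
  · refine wpr_transfer (c := fun j => (starRingEnd 𝕜) (d j))
      (fun j => by simpa using hd j) ?_
    intro x i
    rw [inner_eq, inner_eq]
    refine Finset.sum_congr rfl fun j _ => ?_
    simp only [WithLp.equiv_symm_apply]
    rw [key i j]
    rw [map_mul, RingHomInvPair.comp_apply_eq₂]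
    ring
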